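/- Let G on vertex set V (|V| = n ≥ 2) be the disjoint union of n−1 spanning arborescences A_1,...,A_{n−1}. Call a vertex v a multi-root if at least two of the A_i are rooted at v. If G contains a rainbow arborescence B̃ on a vertex subset Ṽ ⊆ V such that Ṽ contains all multi-roots, then G contains a rainbow spanning arborescence. -/

import Mathlib

open Finset

variable {V : Type*}

/-- `A` is the arc set of an arborescence on vertex set `U` rooted at `r`:
all arcs lie within `U`, the root has no incoming arc, every other vertex of `U`
has exactly one incoming arc, and every vertex of `U` is reachable from `r`. -/
def IsArborOn [DecidableEq V] (U : Finset V) (A : Finset (V × V)) (r : V) : Prop :=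
  r ∈ U ∧ (∀ e ∈ A, e.1 ∈ U ∧ e.2 ∈ U) ∧ (∀ e ∈ A, e.2 ≠ r) ∧
  (∀ v ∈ U, v ≠ r → (A.filter (fun e => e.2 = v)).card = 1) ∧
  (∀ v ∈ U, Relation.ReflTransGen (fun a b => (a, b) ∈ A) r v)

/-- A spanning arborescence on the whole (finite) vertex type. -/
def IsSpanningArbor [Fintype V] [DecidableEq V] (A : Finset (V × V)) (r : V) : Prop :=
  IsArborOn Finset.univ A r

/-- `B` is rainbow w.r.t. the colored arc sets `A 0, …, A (k-1)`:
each arc of `B` can be assigned a color whose class contains it, with all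
assigned colors distinct (i.e. at most one arc from each color). -/
def IsRainbowOf {k : ℕ} (A : Fin k → Finset (V × V)) (B : Finset (V × V)) : Prop :=
  ∃ c : V × V → Fin k, Set.InjOn c ↑B ∧ ∀ e ∈ B, e ∈ A (c e)

private lemma rtg_mono {S T : Finset (V × V)} (hST : S ⊆ T) {x y : V}
    (h : Relation.ReflTransGen (fun a b => (a, b) ∈ S) x y) :
    Relation.ReflTransGen (fun a b => (a, b) ∈ T) x y :=
  by
    induction h with
    | refl => exact Relation.ReflTransGen.refl
    | tail _ hbc ih => exact ih.tail (hST hbc)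

private lemma cross_arc {S : Finset (V × V)} {U : Finset V} {x y : V}
    (h : Relation.ReflTransGen (fun a b => (a, b) ∈ S) x y)
    (hx : x ∈ U) : y ∉ U → ∃ e ∈ S, e.1 ∈ U ∧ e.2 ∉ U := by
  induction h with
  | refl => exact fun hy => absurd hx hy
  | @tail b c hab hbc ih =>
    intro hy
    by_cases hb : b ∈ U
    · exact ⟨(b, c), hbc, hb, hy⟩
    · exact ih hb

private lemma eq_of_rtg {S : Finset (V × V)} {t : V}
    (ht : ∀ e ∈ S, e.2 = t → e.1 = t) {x y : V}
    (h : Relation.ReflTransGen (fun a b => (a, b) ∈ S) x y) : y = t → x = t := by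
  induction h with
  | refl => exact id
  | @tail b c hab hbc ih => exact fun hyt => ih (ht _ hbc hyt)

private lemma eq_of_rtg_no_in {S : Finset (V × V)} {t : V}
    (ht : ∀ e ∈ S, e.2 ≠ t) {x : V}
    (h : Relation.ReflTransGen (fun a b => (a, b) ∈ S) x t) : x = t :=
  eq_of_rtg (fun e he h2 => absurd h2 (ht e he)) h rfl

private lemma arbor_card [DecidableEq V] {U : Finset V} {B : Finset (V × V)} {rt : V}
    (hB : IsArborOn U B rt) : B.card = U.card - 1 := by
  obtain ⟨h1, h2, h3, h4, _⟩ := hB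
  have key : B.card = (U.erase rt).card := by
    apply Finset.card_bij (fun e _ => e.2)
    · intro e he; exact Finset.mem_erase.mpr ⟨h3 e he, (h2 e he).2⟩
    · intro e1 h1' e2 h2' heq
      have hcard := h4 e1.2 ((h2 e1 h1').2) (h3 e1 h1')
      have hm1 : e1 ∈ B.filter (fun e => e.2 = e1.2) := Finset.mem_filter.mpr ⟨h1', rfl⟩
      have hm2 : e2 ∈ B.filter (fun e => e.2 = e1.2) := Finset.mem_filter.mpr ⟨h2', heq.symm⟩
      exact Finset.card_le_one.mp hcard.le e1 hm1 e2 hm2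
    · intro v hv
      obtain ⟨hvne, hvU⟩ := Finset.mem_erase.mp hv
      obtain ⟨e, he⟩ := Finset.card_eq_one.mp (h4 v hvU hvne)
      have hem : e ∈ B.filter (fun f => f.2 = v) := he ▸ Finset.mem_singleton_self e
      exact ⟨e, (Finset.mem_filter.mp hem).1, (Finset.mem_filter.mp hem).2⟩
  rw [key, Finset.card_erase_of_mem h1]

private lemma arbor_extend [DecidableEq V] {U : Finset V} {B : Finset (V × V)} {rt : V}
    (hB : IsArborOn U B rt) {a b : V} (ha : a ∈ U) (hb : b ∉ U) :
    IsArborOn (insert b U) (insert (a, b) B) rt := by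
  obtain ⟨h1, h2, h3, h4, h5⟩ := hB
  have hsub : B ⊆ insert (a, b) B := Finset.subset_insert _ _
  refine ⟨Finset.mem_insert_of_mem h1, ?_, ?_, ?_, ?_⟩
  · intro e he
    rcases Finset.mem_insert.mp he with rfl | heB
    · exact ⟨Finset.mem_insert_of_mem ha, Finset.mem_insert_self _ _⟩
    · exact ⟨Finset.mem_insert_of_mem (h2 e heB).1, Finset.mem_insert_of_mem (h2 e heB).2⟩
  · intro e he
    rcases Finset.mem_insert.mp he with rfl | heB
    · intro h
      have hb2 : b = rt := h
      exact hb (hb2 ▸ h1)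
    · exact h3 e heB
  · intro v hv hvrt
    rcases Finset.mem_insert.mp hv with rfl | hvU
    · have hemp : B.filter (fun e => e.2 = v) = ∅ :=
        Finset.filter_eq_empty_iff.mpr (fun e he h => hb (h ▸ (h2 e he).2))
      rw [Finset.filter_insert, if_pos rfl, hemp]
      simp
    · have hvb : b ≠ v := fun h => hb (h ▸ hvU)
      rw [Finset.filter_insert, if_neg hvb]
      exact h4 v hvU hvrt
  · intro v hv
    rcases Finset.mem_insert.mp hv with rfl | hvU
    · exact (rtg_mono hsub (h5 a ha)).tail (Finset.mem_insert_self _ _)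
    · exact rtg_mono hsub (h5 v hvU)

private lemma arbor_reroot [DecidableEq V] {U : Finset V} {B : Finset (V × V)} {rt : V}
    (hB : IsArborOn U B rt) {x : V} (hx : x ∉ U) :
    IsArborOn (insert x U) (insert (x, rt) B) x := by
  obtain ⟨h1, h2, h3, h4, h5⟩ := hB
  have hsub : B ⊆ insert (x, rt) B := Finset.subset_insert _ _
  refine ⟨Finset.mem_insert_self _ _, ?_, ?_, ?_, ?_⟩
  · intro e he
    rcases Finset.mem_insert.mp he with rfl | heB
    · exact ⟨Finset.mem_insert_self _ _, Finset.mem_insert_of_mem h1⟩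
    · exact ⟨Finset.mem_insert_of_mem (h2 e heB).1, Finset.mem_insert_of_mem (h2 e heB).2⟩
  · intro e he
    rcases Finset.mem_insert.mp he with rfl | heB
    · intro h
      have h2' : rt = x := h
      exact hx (h2' ▸ h1)
    · intro h
      have h2' : e.2 = x := h
      exact hx (h2' ▸ (h2 e heB).2)
  · intro v hv hvx
    rcases Finset.mem_insert.mp hv with rfl | hvU
    · exact absurd rfl hvx
    · by_cases hvrt : v = rt
      · have hemp : B.filter (fun e => e.2 = v) = ∅ :=
          Finset.filter_eq_empty_iff.mpr (fun e he h => h3 e he (h.trans hvrt))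
        rw [Finset.filter_insert, if_pos hvrt.symm, hemp]
        simp
      · have hne : rt ≠ v := fun h => hvrt h.symm
        rw [Finset.filter_insert, if_neg hne]
        exact h4 v hvU hvrt
  · intro v hv
    rcases Finset.mem_insert.mp hv with rfl | hvU
    · exact Relation.ReflTransGen.refl
    · exact Relation.ReflTransGen.head (Finset.mem_insert_self _ _) (rtg_mono hsub (h5 v hvU))

private lemma arbor_rotate [DecidableEq V] {U : Finset V} {B : Finset (V × V)} {rt u z : V}
    (hB : IsArborOn U B rt) (hu : u ∈ U) (hz : (rt, z) ∈ B)
    (hzu : Relation.ReflTransGen (fun a b => (a, b) ∈ B) z u) :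
    IsArborOn U (insert (u, rt) (B.erase (rt, z))) z := by
  obtain ⟨h1, h2, h3, h4, h5⟩ := hB
  have hzU : z ∈ U := (h2 _ hz).2
  have hzrt : z ≠ rt := h3 _ hz
  have transfer : ∀ {v : V}, Relation.ReflTransGen (fun a b => (a, b) ∈ B) z v →
      Relation.ReflTransGen (fun a b => (a, b) ∈ insert (u, rt) (B.erase (rt, z))) z v := by
    intro v h
    induction h with
    | refl => exact Relation.ReflTransGen.refl
    | @tail p q hab hbc ih =>
      have hne : (p, q) ≠ (rt, z) := by
        intro heq
        injection heq with hp hq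
        subst hp
        exact hzrt (eq_of_rtg_no_in h3 hab)
      exact ih.tail (Finset.mem_insert_of_mem (Finset.mem_erase.mpr ⟨hne, hbc⟩))
  have hzreach : Relation.ReflTransGen
      (fun a b => (a, b) ∈ insert (u, rt) (B.erase (rt, z))) z rt :=
    (transfer hzu).tail (Finset.mem_insert_self _ _)
  refine ⟨hzU, ?_, ?_, ?_, ?_⟩
  · intro e he
    rcases Finset.mem_insert.mp he with rfl | heB
    · exact ⟨hu, h1⟩
    · exact h2 e (Finset.mem_of_mem_erase heB)
  · intro e he
    rcases Finset.mem_insert.mp he with rfl | heB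
    · exact fun h => hzrt h.symm
    · intro hez
      have heB' := Finset.mem_of_mem_erase heB
      have hne := Finset.ne_of_mem_erase heB
      have hcard := h4 z hzU hzrt
      have hm1 : e ∈ B.filter (fun f => f.2 = z) := Finset.mem_filter.mpr ⟨heB', hez⟩
      have hm2 : (rt, z) ∈ B.filter (fun f => f.2 = z) := Finset.mem_filter.mpr ⟨hz, rfl⟩
      exact hne (Finset.card_le_one.mp hcard.le e hm1 _ hm2)
  · intro v hv hvz
    by_cases hvrt : v = rt
    · have hemp : (B.erase (rt, z)).filter (fun e => e.2 = v) = ∅ :=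
        Finset.filter_eq_empty_iff.mpr
          (fun e he h => h3 e (Finset.mem_of_mem_erase he) (h.trans hvrt))
      rw [Finset.filter_insert, if_pos hvrt.symm, hemp]
      simp
    · have hne : rt ≠ v := fun h => hvrt h.symm
      rw [Finset.filter_insert, if_neg hne]
      have hfe : (B.erase (rt, z)).filter (fun e => e.2 = v) = B.filter (fun e => e.2 = v) := by
        ext e
        simp only [Finset.mem_filter, Finset.mem_erase]
        constructor
        · rintro ⟨⟨_, he⟩, hv'⟩; exact ⟨he, hv'⟩
        · rintro ⟨he, hv'⟩
          refine ⟨⟨?_, he⟩, hv'⟩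
          rintro rfl
          exact hvz hv'.symm
      rw [hfe]
      exact h4 v hv hvrt
  · intro v hv
    have hpath := h5 v hv
    clear hv
    induction hpath with
    | refl => exact hzreach
    | @tail p q hab hbc ih =>
      by_cases heq : (p, q) = (rt, z)
      · injection heq with hp hq
        subst hq
        exact Relation.ReflTransGen.refl
      · exact ih.tail (Finset.mem_insert_of_mem (Finset.mem_erase.mpr ⟨heq, hbc⟩))

private lemma rainbow_insert [DecidableEq V] {k : ℕ} {A : Fin k → Finset (V × V)}
    {B : Finset (V × V)} {c : V × V → Fin k} (hc1 : Set.InjOn c ↑B)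
    (hc2 : ∀ e ∈ B, e ∈ A (c e)) {e : V × V} {i : Fin k}
    (he : e ∉ B) (hei : e ∈ A i) (hi : i ∉ B.image c) :
    IsRainbowOf A (insert e B) := by
  refine ⟨fun f => if f = e then i else c f, ?_, ?_⟩
  · intro f hf g hg hfg
    simp only [Finset.coe_insert, Set.mem_insert_iff, Finset.mem_coe] at hf hg
    dsimp only at hfg
    by_cases hfe : f = e <;> by_cases hge : g = e
    · rw [hfe, hge]
    · have hgB : g ∈ B := hg.resolve_left hge
      rw [if_pos hfe, if_neg hge] at hfg
      exact absurd (by rw [hfg]; exact Finset.mem_image_of_mem c hgB) hi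
    · have hfB : f ∈ B := hf.resolve_left hfe
      rw [if_neg hfe, if_pos hge] at hfg
      exact absurd (by rw [← hfg]; exact Finset.mem_image_of_mem c hfB) hi
    · have hfB : f ∈ B := hf.resolve_left hfe
      have hgB : g ∈ B := hg.resolve_left hge
      rw [if_neg hfe, if_neg hge] at hfg
      exact hc1 hfB hgB hfg
  · intro f hf
    dsimp only
    rcases Finset.mem_insert.mp hf with rfl | hfB
    · rw [if_pos rfl]; exact hei
    · rw [if_neg (show ¬ f = e from fun h => he (h ▸ hfB))]; exact hc2 f hfB

private lemma grow [Fintype V] [DecidableEq V] (hn : 2 ≤ Fintype.card V)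
    (A : Fin (Fintype.card V - 1) → Finset (V × V)) (r : Fin (Fintype.card V - 1) → V)
    (hA : ∀ i, IsSpanningArbor (A i) (r i)) :
    ∀ (m : ℕ) (U : Finset V) (B : Finset (V × V)) (rt : V),
      (Finset.univ \ U).card ≤ m → IsArborOn U B rt → IsRainbowOf A B →
      (∀ v : V, 2 ≤ (Finset.univ.filter (fun i => r i = v)).card → v ∈ U) →
      ∃ (B' : Finset (V × V)) (r' : V), IsSpanningArbor B' r' ∧ IsRainbowOf A B' := by
  intro m
  induction m with
  | zero =>
    intro U B rt hm hB hrb _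
    have hsd : Finset.univ \ U = ∅ := Finset.card_eq_zero.mp (Nat.le_zero.mp hm)
    have hU : U = Finset.univ := by
      apply Finset.eq_univ_of_forall
      intro v
      by_contra hv
      have hmem : v ∈ Finset.univ \ U := Finset.mem_sdiff.mpr ⟨Finset.mem_univ _, hv⟩
      rw [hsd] at hmem
      exact absurd hmem (Finset.notMem_empty v)
    subst hU
    exact ⟨B, rt, hB, hrb⟩
  | succ m ih =>
    intro U B rt hm hB hrb hmulti
    by_cases hUuniv : U = Finset.univ
    · subst hUuniv
      exact ⟨B, rt, hB, hrb⟩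
    obtain ⟨c, hc1, hc2⟩ := hrb
    have hrec : ∀ b : V, b ∉ U → (Finset.univ \ insert b U).card ≤ m := by
      intro b hb
      have hbmem : b ∈ Finset.univ \ U := Finset.mem_sdiff.mpr ⟨Finset.mem_univ b, hb⟩
      rw [Finset.sdiff_insert, Finset.card_erase_of_mem hbmem]
      omega
    have hvinf' : ∃ v, v ∉ U := by
      by_contra h
      push_neg at h
      exact hUuniv (Finset.eq_univ_iff_forall.mpr h)
    obtain ⟨vinf, hvinf⟩ := hvinf'
    have hBcard : B.card = U.card - 1 := arbor_card hB
    have hUpos : 1 ≤ U.card := Finset.card_pos.mpr ⟨rt, hB.1⟩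
    have hUlt : U.card < Fintype.card V := by
      have h1 := Finset.card_lt_card (Finset.ssubset_univ_iff.mpr hUuniv)
      rwa [Finset.card_univ] at h1
    have husedcard : (B.image c).card = U.card - 1 := by
      rw [Finset.card_image_of_injOn hc1, hBcard]
    have hpair : ∀ (i1 i2 : Fin (Fintype.card V - 1)), i1 ≠ i2 → r i1 = r i2 →
        2 ≤ (Finset.univ.filter (fun i => r i = r i2)).card := by
      intro i1 i2 hne heq
      have hsub : ({i1, i2} : Finset (Fin (Fintype.card V - 1))) ⊆
          Finset.univ.filter (fun i => r i = r i2) := by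
        intro x hx
        rcases Finset.mem_insert.mp hx with rfl | hx
        · exact Finset.mem_filter.mpr ⟨Finset.mem_univ _, heq⟩
        · rw [Finset.mem_singleton.mp hx]
          exact Finset.mem_filter.mpr ⟨Finset.mem_univ _, rfl⟩
      calc 2 = ({i1, i2} : Finset (Fin (Fintype.card V - 1))).card :=
              (Finset.card_pair hne).symm
        _ ≤ _ := Finset.card_le_card hsub
    have hexU : ∃ i, i ∉ B.image c := by
      by_contra h
      push_neg at h
      have huniv : B.image c = Finset.univ := Finset.eq_univ_iff_forall.mpr h
      have hcu : (B.image c).card = Fintype.card V - 1 := by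
        rw [huniv, Finset.card_univ, Fintype.card_fin]
      omega
    by_cases hM1 : ∃ i, i ∉ B.image c ∧ ∃ e ∈ A i, e.1 ∈ U ∧ e.2 ∉ U
    · obtain ⟨i, hiu, e, heA, he1, he2⟩ := hM1
      obtain ⟨a, b⟩ := e
      have heB : (a, b) ∉ B := fun h => he2 (hB.2.1 _ h).2
      exact ih (insert b U) (insert (a, b) B) rt (hrec b he2)
        (arbor_extend hB he1 he2)
        (rainbow_insert hc1 hc2 heB heA hiu)
        (fun v hv => Finset.mem_insert_of_mem (hmulti v hv))
    by_cases hM2 : ∃ i, i ∉ B.image c ∧ ∃ e ∈ A i, e.1 ∉ U ∧ e.2 = rt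
    · obtain ⟨i, hiu, e, heA, hx, hy⟩ := hM2
      obtain ⟨x, y⟩ := e
      have hy' : y = rt := hy
      rw [hy'] at heA
      have heB : (x, rt) ∉ B := fun h => hB.2.2.1 _ h rfl
      exact ih (insert x U) (insert (x, rt) B) x (hrec x hx)
        (arbor_reroot hB hx)
        (rainbow_insert hc1 hc2 heB heA hiu)
        (fun v hv => Finset.mem_insert_of_mem (hmulti v hv))
    push_neg at hM1 hM2
    have hrootout : ∀ i, i ∉ B.image c → r i ∉ U := by
      intro i hiu hriU
      obtain ⟨e, heA, he1, he2⟩ :=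
        cross_arc ((hA i).2.2.2.2 vinf (Finset.mem_univ _)) hriU hvinf
      exact he2 (hM1 i hiu e heA he1)
    obtain ⟨i0, hi0⟩ := hexU
    have hri0 : r i0 ∉ U := hrootout i0 hi0
    have hrtne : rt ≠ r i0 := fun h => hri0 (h ▸ hB.1)
    obtain ⟨e0, he0⟩ := Finset.card_eq_one.mp ((hA i0).2.2.2.1 rt (Finset.mem_univ _) hrtne)
    have he0m : e0 ∈ (A i0).filter (fun e => e.2 = rt) := he0 ▸ Finset.mem_singleton_self e0
    obtain ⟨u, w⟩ := e0
    have hwrt : w = rt := (Finset.mem_filter.mp he0m).2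
    rw [hwrt] at he0m he0
    have he0A : (u, rt) ∈ A i0 := (Finset.mem_filter.mp he0m).1
    have huniq : ∀ f ∈ A i0, f.2 = rt → f = (u, rt) := by
      intro f hf hfr
      have hfm : f ∈ (A i0).filter (fun e => e.2 = rt) := Finset.mem_filter.mpr ⟨hf, hfr⟩
      rw [he0] at hfm
      exact Finset.mem_singleton.mp hfm
    have huU : u ∈ U := by
      by_contra huU
      exact (hM2 i0 hi0 (u, rt) he0A huU) rfl
    have hurt : u ≠ rt := by
      intro h
      have hall : ∀ e ∈ A i0, e.2 = rt → e.1 = rt := by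
        intro e he h2
        rw [huniq e he h2]
        exact h
      have hrirt : r i0 = rt := eq_of_rtg hall ((hA i0).2.2.2.2 rt (Finset.mem_univ _)) rfl
      exact hrtne hrirt.symm
    have hrtu := hB.2.2.2.2 u huU
    obtain ⟨z, hrz, hzu⟩ : ∃ z, (rt, z) ∈ B ∧
        Relation.ReflTransGen (fun a b => (a, b) ∈ B) z u := by
      rcases hrtu.cases_head with h | ⟨z, h1, h2⟩
      · exact absurd h.symm hurt
      · exact ⟨z, h1, h2⟩
    have hB' := arbor_rotate hB huU hrz hzu
    have hrzA : (rt, z) ∈ A (c (rt, z)) := hc2 _ hrz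
    have hjused : c (rt, z) ∈ B.image c := Finset.mem_image_of_mem c hrz
    have hrjU : r (c (rt, z)) ∈ U := by
      by_contra hrjU
      have hucard : (Finset.univ \ U).card ≤ (Finset.univ \ B.image c).card := by
        rw [Finset.card_sdiff_of_subset (Finset.subset_univ _), Finset.card_sdiff_of_subset (Finset.subset_univ _),
          husedcard, Finset.card_univ, Finset.card_univ, Fintype.card_fin]
        omega
      obtain ⟨i', hi', hri'⟩ := Finset.surj_on_of_inj_on_of_card_le
        (fun (i : Fin (Fintype.card V - 1)) (_ : i ∈ Finset.univ \ B.image c) => r i)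
        (fun i hi => Finset.mem_sdiff.mpr
          ⟨Finset.mem_univ _, hrootout i (Finset.mem_sdiff.mp hi).2⟩)
        (fun i1 i2 h1 h2 heq => by
          by_contra hne
          exact (hrootout i1 (Finset.mem_sdiff.mp h1).2)
            (hmulti _ (hpair i2 i1 (fun h => hne h.symm) heq.symm)))
        hucard
        (r (c (rt, z))) (Finset.mem_sdiff.mpr ⟨Finset.mem_univ _, hrjU⟩)
      have hne : i' ≠ c (rt, z) := fun h => (Finset.mem_sdiff.mp hi').2 (h ▸ hjused)
      have h2le := hpair i' (c (rt, z)) hne hri'.symm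
      exact hrjU (hmulti _ h2le)
    obtain ⟨f, hfA, hf1, hf2⟩ :=
      cross_arc ((hA (c (rt, z))).2.2.2.2 vinf (Finset.mem_univ _)) hrjU hvinf
    obtain ⟨a, b⟩ := f
    have hB'' := arbor_extend hB' hf1 hf2
    have habB : (a, b) ∉ B := fun h => hf2 (hB.2.1 _ h).2
    have hurtB : (u, rt) ∉ B := fun h => hB.2.2.1 _ h rfl
    have habur : (a, b) ≠ (u, rt) := by
      intro h
      injection h with h1 h2
      exact hf2 (h2 ▸ hB.1)
    have hrb'' : IsRainbowOf A (insert (a, b) (insert (u, rt) (B.erase (rt, z)))) := by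
      refine ⟨fun f => if f = (a, b) then c (rt, z) else if f = (u, rt) then i0 else c f,
        ?_, ?_⟩
      · have hval : ∀ p : V × V, p ∈ B →
            (if p = (a, b) then c (rt, z) else if p = (u, rt) then i0 else c p) = c p := by
          intro p hp
          rw [if_neg (show ¬ p = (a, b) from fun h => habB (h ▸ hp)),
            if_neg (show ¬ p = (u, rt) from fun h => hurtB (h ▸ hp))]
        intro f hf g hg hfg
        simp only [Finset.coe_insert, Set.mem_insert_iff, Finset.mem_coe,
          Finset.mem_erase] at hf hg
        dsimp only at hfg
        rcases hf with rfl | rfl | ⟨hfne, hfB⟩ <;> rcases hg with rfl | rfl | ⟨hgne, hgB⟩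
        · rfl
        · rw [if_pos rfl, if_neg habur.symm, if_pos rfl] at hfg
          exact absurd (hfg ▸ hjused) hi0
        · rw [if_pos rfl, hval g hgB] at hfg
          exact absurd (hc1 hrz hgB hfg).symm hgne
        · rw [if_neg habur.symm, if_pos rfl, if_pos rfl] at hfg
          exact absurd (hfg ▸ hjused) hi0
        · rfl
        · rw [if_neg habur.symm, if_pos rfl, hval g hgB] at hfg
          exact absurd (hfg ▸ Finset.mem_image_of_mem c hgB) hi0
        · rw [hval f hfB, if_pos rfl] at hfg
          exact absurd (hc1 hrz hfB hfg.symm).symm hfne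
        · rw [hval f hfB, if_neg habur.symm, if_pos rfl] at hfg
          exact absurd (hfg ▸ Finset.mem_image_of_mem c hfB) hi0
        · rw [hval f hfB, hval g hgB] at hfg
          exact hc1 hfB hgB hfg
      · intro f hf
        dsimp only
        rcases Finset.mem_insert.mp hf with rfl | hf'
        · rw [if_pos rfl]; exact hfA
        rcases Finset.mem_insert.mp hf' with rfl | hf''
        · rw [if_neg habur.symm, if_pos rfl]; exact he0A
        · have hfB := Finset.mem_of_mem_erase hf''
          rw [if_neg (show ¬ f = (a, b) from fun h => habB (h ▸ hfB)),
            if_neg (show ¬ f = (u, rt) from fun h => hurtB (h ▸ hfB))]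
          exact hc2 f hfB
    exact ih (insert b U) _ z (hrec b hf2) hB'' hrb''
      (fun v hv => Finset.mem_insert_of_mem (hmulti v hv))

theorem stmt4 [Fintype V] [DecidableEq V] (hn : 2 ≤ Fintype.card V)
    (A : Fin (Fintype.card V - 1) → Finset (V × V)) (r : Fin (Fintype.card V - 1) → V)
    (hA : ∀ i, IsSpanningArbor (A i) (r i))
    (Vt : Finset V) (Bt : Finset (V × V)) (rt : V)
    (hBt : IsArborOn Vt Bt rt) (hrb : IsRainbowOf A Bt)
    (hmulti : ∀ v : V, 2 ≤ (Finset.univ.filter (fun i => r i = v)).card → v ∈ Vt) :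
    ∃ (B : Finset (V × V)) (r' : V), IsSpanningArbor B r' ∧ IsRainbowOf A B := by
  exact grow hn A r hA (Finset.univ \ Vt).card Vt Bt rt le_rfl hBt hrb hmulti
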